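/- Let (Ω, mΩ, μ) be a probability space, let 𝒮, 𝒵, 𝒢 be sub-σ-algebras of mΩ with 𝒢 ≤ 𝒮 ⊔ 𝒵, and let v : Ω → ℝ be integrable. Assume that the σ-algebra 𝒮 ⊔ σ(v) generated by 𝒮 together with v is independent of 𝒵 under μ, and that the conditional expectation E[v | 𝒮] is (a.e. equal to) a 𝒢-measurable function. Then E[v | 𝒮] = E[v | 𝒢] μ-almost everywhere. -/

import Mathlib

open MeasureTheory ProbabilityTheory

/-- If `f` is integrable and measurable w.r.t. a σ-algebra independent of `𝒵`, then the
integral of `f` over a `𝒵`-measurable set `B` factorizes as `μ(B) ∫ f`. -/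
lemma aux_setIntegral_indep {Ω : Type*} {mΩ : MeasurableSpace Ω} {μ : Measure Ω}
    [IsProbabilityMeasure μ] {m₁ 𝒵 : MeasurableSpace Ω} (hZ : 𝒵 ≤ mΩ)
    (hind : Indep m₁ 𝒵 μ) (f : Ω → ℝ) (hf : Measurable[m₁] f) (hfi : Integrable f μ)
    {B : Set Ω} (hB : MeasurableSet[𝒵] B) :
    ∫ x in B, f x ∂μ = (μ B).toReal * ∫ x, f x ∂μ := by
  letI : MeasurableSpace Ω := mΩ
  have hBm : MeasurableSet[mΩ] B := hZ _ hB
  have hIndepFun : IndepFun (B.indicator (fun _ => (1 : ℝ))) f μ := by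
    have h1 : MeasurableSpace.comap (B.indicator (fun _ => (1 : ℝ))) inferInstance ≤ 𝒵 := by
      have hm : Measurable[𝒵] (B.indicator (fun _ => (1 : ℝ))) :=
        (measurable_const : Measurable[𝒵] fun _ : Ω => (1 : ℝ)).indicator hB
      exact hm.comap_le
    have h2 : MeasurableSpace.comap f inferInstance ≤ m₁ := hf.comap_le
    exact indep_of_indep_of_le_left (indep_of_indep_of_le_right hind.symm h2) h1
  have hind_int : Integrable (B.indicator (fun _ => (1 : ℝ))) μ :=
    (integrable_const (1 : ℝ)).indicator hBm
  have hmul := hIndepFun.integral_mul_eq_mul_integral hind_int.aestronglyMeasurable hfi.aestronglyMeasurable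
  have heq : (B.indicator (fun _ => (1 : ℝ))) * f = B.indicator f := by
    ext x
    by_cases hx : x ∈ B <;> simp [hx]
  rw [heq] at hmul
  rw [← integral_indicator hBm, hmul, integral_indicator hBm, setIntegral_const, smul_eq_mul, mul_one]
  rfl

theorem stmt0 {Ω : Type*} {mΩ : MeasurableSpace Ω} {μ : Measure Ω} [IsProbabilityMeasure μ]
    (𝒮 𝒵 𝒢 : MeasurableSpace Ω) (hS : 𝒮 ≤ mΩ) (hZ : 𝒵 ≤ mΩ) (hG : 𝒢 ≤ mΩ)
    (hGSZ : 𝒢 ≤ 𝒮 ⊔ 𝒵)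
    (v : Ω → ℝ) (hv : Integrable v μ)
    (hindep : Indep (𝒮 ⊔ MeasurableSpace.comap v (borel ℝ)) 𝒵 μ)
    (hmeas : AEStronglyMeasurable[𝒢] (μ[v | 𝒮]) μ) :
    μ[v | 𝒮] =ᵐ[μ] μ[v | 𝒢] := by
  letI : MeasurableSpace Ω := mΩ
  have hSZ : 𝒮 ⊔ 𝒵 ≤ mΩ := sup_le hS hZ
  have hgsm : StronglyMeasurable[𝒮] (μ[v | 𝒮]) := stronglyMeasurable_condExp
  have hgint : Integrable (μ[v | 𝒮]) μ := integrable_condExp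
  have hSind : Indep 𝒮 𝒵 μ := indep_of_indep_of_le_left hindep le_sup_left
  -- key: set integrals of μ[v|𝒮] and v agree on 𝒮 ⊔ 𝒵
  have key : ∀ s, MeasurableSet[𝒮 ⊔ 𝒵] s →
      ∫ x in s, (μ[v | 𝒮]) x ∂μ = ∫ x in s, v x ∂μ := by
    set C : Set (Set Ω) :=
      {s | ∃ A B, MeasurableSet[𝒮] A ∧ MeasurableSet[𝒵] B ∧ s = A ∩ B} with hC
    have hgen : (𝒮 ⊔ 𝒵) = MeasurableSpace.generateFrom C := by
      apply le_antisymm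
      · refine sup_le ?_ ?_
        · intro A hA
          exact MeasurableSpace.measurableSet_generateFrom
            ⟨A, Set.univ, hA, MeasurableSet.univ, (Set.inter_univ A).symm⟩
        · intro B hB
          exact MeasurableSpace.measurableSet_generateFrom
            ⟨Set.univ, B, MeasurableSet.univ, hB, (Set.univ_inter B).symm⟩
      · refine MeasurableSpace.generateFrom_le ?_
        rintro s ⟨A, B, hA, hB, rfl⟩
        exact MeasurableSet.inter ((le_sup_left : 𝒮 ≤ 𝒮 ⊔ 𝒵) _ hA)
          ((le_sup_right : 𝒵 ≤ 𝒮 ⊔ 𝒵) _ hB)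
    have hpi : IsPiSystem C := by
      rintro s ⟨A, B, hA, hB, rfl⟩ t ⟨A', B', hA', hB', rfl⟩ -
      exact ⟨A ∩ A', B ∩ B', hA.inter hA', hB.inter hB', by
        ext x; simp only [Set.mem_inter_iff]; tauto⟩
    intro s hs
    refine MeasurableSpace.induction_on_inter (m := 𝒮 ⊔ 𝒵)
      (C := fun s _ => ∫ x in s, (μ[v | 𝒮]) x ∂μ = ∫ x in s, v x ∂μ) hgen hpi (by simp) ?_ ?_ ?_ s hs
    · rintro t ⟨A, B, hA, hB, rfl⟩
      have hAm : MeasurableSet[mΩ] A := hS _ hA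
      have h1 : ∫ x in A ∩ B, (μ[v | 𝒮]) x ∂μ = ∫ x in B, (A.indicator (μ[v | 𝒮])) x ∂μ := by
        rw [setIntegral_indicator hAm, Set.inter_comm]
      have h2 : ∫ x in A ∩ B, v x ∂μ = ∫ x in B, (A.indicator v) x ∂μ := by
        rw [setIntegral_indicator hAm, Set.inter_comm]
      rw [h1, h2]
      rw [aux_setIntegral_indep hZ hSind (A.indicator (μ[v | 𝒮]))
          (hgsm.measurable.indicator hA) (hgint.indicator hAm) hB,
        aux_setIntegral_indep hZ hindep (A.indicator v)
          (Measurable.indicator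
            ((Measurable.of_comap_le le_rfl).mono
              (le_sup_right : MeasurableSpace.comap v (borel ℝ) ≤ 𝒮 ⊔ _) le_rfl)
            ((le_sup_left : 𝒮 ≤ 𝒮 ⊔ MeasurableSpace.comap v (borel ℝ)) _ hA))
          (hv.indicator hAm) hB]
      rw [integral_indicator hAm, integral_indicator hAm, setIntegral_condExp hS hv hA]
    · intro t htm hteq
      have htm' : MeasurableSet[mΩ] t := hSZ _ htm
      have h1 := integral_add_compl htm' hgint
      have h2 := integral_add_compl htm' hv
      have h3 : ∫ x, (μ[v | 𝒮]) x ∂μ = ∫ x, v x ∂μ := integral_condExp hS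
      linarith
    · intro f hdisj hfm heq
      have hfm' : ∀ i, MeasurableSet[mΩ] (f i) := fun i => hSZ _ (hfm i)
      rw [integral_iUnion hfm' hdisj hgint.integrableOn,
        integral_iUnion hfm' hdisj hv.integrableOn]
      exact tsum_congr heq
  exact ae_eq_condExp_of_forall_setIntegral_eq hG hv
    (fun s _ _ => hgint.integrableOn)
    (fun s hs _ => key s (hGSZ s hs)) hmeas
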